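/- arXiv:2304.14642 — 2 statements merged into one kernel-verified Lean document; each statement's English description precedes it below -/
import Mathlib

section
/- For every γ ∈ (0,1) and every step size s > 0, there exists t₀ > 3γ√s (depending only on γ and s) such that along any solution X of the high-resolution differential equation, the continuous Lyapunov function E satisfies, for all t ≥ t₀, dE(t)/dt ≤ − √s · t^γ (t^γ − γ√s t^{γ−1}) · ‖∇f(X(t) + √s Ẋ(t))‖²; in particular E is nonincreasing on [t₀, ∞). -/
open Set Filter Topology

/-- The continuous Lyapunov function for the underdamped high-resolution ODE. -/
noncomputable def lyapCont (γ s : ℝ) {d : ℕ} (f : EuclideanSpace ℝ (Fin d) → ℝ)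
    (xstar : EuclideanSpace ℝ (Fin d)) (X V : ℝ → EuclideanSpace ℝ (Fin d)) (t : ℝ) : ℝ :=
  (t ^ γ * (t ^ γ - 2 * γ * Real.sqrt s * t ^ (γ - 1)) / (t - 3 * γ * Real.sqrt s)) *
      (t + 3 * γ * Real.sqrt s / 2) * (f (X t + Real.sqrt s • V t) - f xstar) +
    (1 / 2) * ‖(t ^ γ) • V t + (2 * γ * t ^ (γ - 1)) • (X t - xstar)‖ ^ 2 +
    γ * (1 - γ) * t ^ (2 * (γ - 1)) * ‖X t - xstar‖ ^ 2

local notation "⟪" x ", " y "⟫" => @inner ℝ _ _ x y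

private lemma grad_convex_ineq {d : ℕ} {f : EuclideanSpace ℝ (Fin d) → ℝ}
    (hconv : ConvexOn ℝ Set.univ f) {y g : EuclideanSpace ℝ (Fin d)}
    (hg : HasGradientAt f g y) (z : EuclideanSpace ℝ (Fin d)) :
    f y + ⟪g, z - y⟫ ≤ f z := by
  set φ : ℝ → ℝ := fun r => f (r • (z - y) + y) with hφ
  have hφconv : ConvexOn ℝ Set.univ φ := by
    have := hconv.comp_affineMap (AffineMap.lineMap y z)
    simpa [hφ, Function.comp_def, AffineMap.lineMap_apply] using this
  have hcurve : HasDerivAt (fun r : ℝ => r • (z - y) + y) (z - y) 0 := by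
    simpa using ((hasDerivAt_id (0:ℝ)).smul_const (z - y)).add_const y
  have hφd : HasDerivAt φ ⟪g, z - y⟫ 0 := by
    have hpt : ((0:ℝ) • (z - y) + y) = y := by simp
    have hfd := hg.hasFDerivAt
    rw [← hpt] at hfd
    have h := hfd.comp_hasDerivAt 0 hcurve
    simp only [InnerProductSpace.toDual_apply_apply] at h
    exact h
  have hslope := hφconv.le_slope_of_hasDerivAt (mem_univ (0:ℝ)) (mem_univ (1:ℝ)) one_pos hφd
  have : ⟪g, z - y⟫ ≤ f z - f y := by
    simpa [slope, hφ] using hslope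
  linarith

private lemma poly1 {t γ b : ℝ} (hγ0 : 0 < γ) (hγ1 : γ < 1) (hb : 0 < b)
    (ht : 12 * γ * b + 1 ≤ t) :
    ((2*γ-1)*((t-2*γ*b)*(t+3*γ*b/2)) + t*(2*t-γ*b/2))*(t-3*γ*b) - t*((t-2*γ*b)*(t+3*γ*b/2))
      ≤ 2*γ*(t+3*γ*b/2)*(t-3*γ*b)^2 := by
  have hc : 0 < γ * b := mul_pos hγ0 hb
  have ht0 : (0:ℝ) < t := by nlinarith
  have h12 : (0:ℝ) ≤ t - 12*(γ*b) := by nlinarith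
  nlinarith [mul_nonneg (mul_nonneg hc.le hc.le) hc.le,
    mul_nonneg (mul_nonneg hc.le ht0.le) h12,
    mul_nonneg (mul_nonneg (mul_nonneg hc.le hγ0.le) ht0.le) h12,
    mul_nonneg (mul_nonneg hc.le hc.le) hγ0.le,
    mul_nonneg (mul_nonneg hc.le hc.le) ht0.le]

private lemma poly2 {t γ b : ℝ} (hγ0 : 0 < γ) (hγ1 : γ < 1) (hb : 0 < b)
    (ht : 12 * γ * b + 1 ≤ t) :
    t*(t-γ*b)*(t-3*γ*b) ≤ (t-2*γ*b)*(t+3*γ*b/2)^2 := by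
  have hc : 0 < γ * b := mul_pos hγ0 hb
  have ht0 : (0:ℝ) < t := by nlinarith
  have h12 : (0:ℝ) ≤ t - 12*(γ*b) := by nlinarith
  nlinarith [mul_nonneg (mul_nonneg hc.le hc.le) hc.le,
    mul_nonneg (mul_nonneg hc.le ht0.le) h12,
    mul_nonneg (mul_nonneg (mul_nonneg hc.le hc.le) ht0.le) h12]

set_option maxHeartbeats 2000000 in
/-- For every γ ∈ (0,1) and every step size s > 0, there exists
t₀ > 3γ√s (depending only on γ and s) such that along any solution X of the
high-resolution differential equation, the continuous Lyapunov function E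
satisfies, for all t ≥ t₀,
dE(t)/dt ≤ − √s · t^γ (t^γ − γ√s t^{γ−1}) · ‖∇f(X(t) + √s Ẋ(t))‖²;
in particular E is nonincreasing on [t₀, ∞). -/
theorem underdamped_continuous_lyapunov_decay
    (γ s : ℝ) (hγ : γ ∈ Set.Ioo (0 : ℝ) 1) (hs : 0 < s) :
    ∃ t₀ : ℝ, 3 * γ * Real.sqrt s < t₀ ∧
      ∀ (d : ℕ) (L : ℝ) (f : EuclideanSpace ℝ (Fin d) → ℝ)
        (f' : EuclideanSpace ℝ (Fin d) → EuclideanSpace ℝ (Fin d))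
        (xstar : EuclideanSpace ℝ (Fin d))
        (X V : ℝ → EuclideanSpace ℝ (Fin d)),
        0 < L →
        ConvexOn ℝ Set.univ f →
        (∀ z, HasGradientAt f (f' z) z) →
        (∀ z w, ‖f' z - f' w‖ ≤ L * ‖z - w‖) →
        (∀ z, f xstar ≤ f z) →
        (∀ t ∈ Set.Ioi (0 : ℝ), HasDerivAt X (V t) t) →
        (∀ t ∈ Set.Ioi (0 : ℝ), HasDerivAt V
          (-((3 * γ / t) • V t +
              (1 + 3 * γ * Real.sqrt s / (2 * t)) • f' (X t + Real.sqrt s • V t))) t) →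
        (∀ t : ℝ, t₀ ≤ t →
          ∃ E' : ℝ, HasDerivAt (lyapCont γ s f xstar X V) E' t ∧
            E' ≤ -(Real.sqrt s * (t ^ γ * (t ^ γ - γ * Real.sqrt s * t ^ (γ - 1))) *
              ‖f' (X t + Real.sqrt s • V t)‖ ^ 2)) ∧
        AntitoneOn (lyapCont γ s f xstar X V) (Set.Ici t₀) := by
  obtain ⟨hγ0, hγ1⟩ := hγ
  have hb : 0 < Real.sqrt s := Real.sqrt_pos.mpr hs
  refine ⟨12 * γ * Real.sqrt s + 1, by nlinarith, ?_⟩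
  intro d L f f' xstar X V hL hconv hgrad hlip hmin hX hV
  have key : ∀ t : ℝ, 12 * γ * Real.sqrt s + 1 ≤ t →
      ∃ E' : ℝ, HasDerivAt (lyapCont γ s f xstar X V) E' t ∧
        E' ≤ -(Real.sqrt s * (t ^ γ * (t ^ γ - γ * Real.sqrt s * t ^ (γ - 1))) *
          ‖f' (X t + Real.sqrt s • V t)‖ ^ 2) := by
    intro t ht
    refine ⟨(t^(γ-1))^2 * ((((2*γ-1)*((t-2*γ*Real.sqrt s)*(t+3*γ*Real.sqrt s/2)) + t*(2*t-γ*Real.sqrt s/2))*(t-3*γ*Real.sqrt s) - t*((t-2*γ*Real.sqrt s)*(t+3*γ*Real.sqrt s/2))) / (t-3*γ*Real.sqrt s)^2)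
          * (f (X t + Real.sqrt s • V t) - f xstar)
        - 2*γ*(t^(γ-1))^2*(t+3*γ*Real.sqrt s/2) *
            (Real.sqrt s * ⟪f' (X t + Real.sqrt s • V t), V t⟫ + ⟪f' (X t + Real.sqrt s • V t), X t - xstar⟫)
        - Real.sqrt s*(t^(γ-1))^2*((t-2*γ*Real.sqrt s)*(t+3*γ*Real.sqrt s/2)^2/(t-3*γ*Real.sqrt s)) * ‖f' (X t + Real.sqrt s • V t)‖^2
        + 2*γ*((γ-1)*(γ+1))*(t^(γ-1))^2/t * ‖X t - xstar‖^2, ?_, ?_⟩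
    · -- the derivative computation
      unfold lyapCont
      set b := Real.sqrt s with hb_def
      have hc : 0 < γ * b := mul_pos hγ0 hb
      have ht0 : (0:ℝ) < t := by nlinarith
      have htD : (0:ℝ) < t - 3*γ*b := by nlinarith
      have htmem : t ∈ Set.Ioi (0:ℝ) := ht0
      have eγ : t ^ γ = t ^ (γ-1) * t := by
        rw [← Real.rpow_add_one ht0.ne' (γ-1)]; ring_nf
      have eγ2 : t ^ (γ-1-1) = t ^ (γ-1) / t := by
        rw [show γ-1-1 = (γ-1)+(-1) by ring, Real.rpow_add ht0, Real.rpow_neg_one]; ring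
      have e2γ : t ^ (2*(γ-1)) = (t ^ (γ-1))^2 := by
        rw [show 2*(γ-1) = (γ-1)+(γ-1) by ring, Real.rpow_add ht0, sq]
      have e2γ1 : t ^ (2*(γ-1)-1) = (t ^ (γ-1))^2 / t := by
        rw [show 2*(γ-1)-1 = (γ-1)+((γ-1)+(-1)) by ring, Real.rpow_add ht0, Real.rpow_add ht0,
          Real.rpow_neg_one, sq]; ring
      have h1 : HasDerivAt (fun τ : ℝ => τ ^ γ) (γ * t^(γ-1)) t :=
        Real.hasDerivAt_rpow_const (Or.inl ht0.ne')
      have h2 : HasDerivAt (fun τ : ℝ => τ ^ (γ-1)) ((γ-1) * t^(γ-1-1)) t :=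
        Real.hasDerivAt_rpow_const (Or.inl ht0.ne')
      have h3 : HasDerivAt (fun τ : ℝ => τ ^ (2*(γ-1))) ((2*(γ-1)) * t^(2*(γ-1)-1)) t :=
        Real.hasDerivAt_rpow_const (Or.inl ht0.ne')
      have hN1 := h1.mul (h1.sub (h2.const_mul (2*γ*b)))
      have hden : HasDerivAt (fun τ:ℝ => τ - 3*γ*b) 1 t := by
        simpa using (hasDerivAt_id t).sub_const (3*γ*b)
      have hQ1 := hN1.div hden htD.ne'
      have hM : HasDerivAt (fun τ:ℝ => τ + 3*γ*b/2) 1 t := by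
        simpa using (hasDerivAt_id t).add_const (3*γ*b/2)
      have hA := hQ1.mul hM
      have hy : HasDerivAt (fun τ => X τ + b • V τ)
          (V t + b • (-((3 * γ / t) • V t + (1 + 3 * γ * b / (2 * t)) • f' (X t + b • V t)))) t :=
        (hX t htmem).add ((hV t htmem).const_smul b)
      have hfy : HasDerivAt (fun τ => f (X τ + b • V τ))
          (⟪f' (X t + b • V t), V t + b • (-((3 * γ / t) • V t + (1 + 3 * γ * b / (2 * t)) • f' (X t + b • V t)))⟫) t := by
        have := (hgrad (X t + b • V t)).hasFDerivAt.comp_hasDerivAt t hy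
        simp only [InnerProductSpace.toDual_apply_apply] at this
        exact this
      have hFv := hfy.sub_const (f xstar)
      have hterm1 := hA.mul hFv
      have hv1 := h1.smul (hV t htmem)
      have hv2 := (h2.const_mul (2*γ)).smul ((hX t htmem).sub_const xstar)
      have hnorm := (hv1.add hv2).norm_sq
      have hterm2 := hnorm.const_mul (1/2 : ℝ)
      have hw2 := ((hX t htmem).sub_const xstar).norm_sq
      have hterm3 := (h3.const_mul (γ*(1-γ))).mul hw2
      have hraw := (hterm1.add hterm2).add hterm3
      convert hraw using 1
      case e'_4 => rfl
      case e'_5 => rfl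
      case e'_8 => rfl
      simp only [Pi.mul_apply, Pi.sub_apply, Pi.div_apply, Pi.add_apply, Pi.smul_apply']
      rw [eγ, eγ2, e2γ, e2γ1]
      simp only [inner_add_left, inner_add_right,
        real_inner_smul_left, real_inner_smul_right, inner_neg_left, inner_neg_right,
        real_inner_comm (V t) (f' (X t + b • V t)),
        real_inner_comm (X t - xstar) (f' (X t + b • V t)),
        real_inner_comm (V t) (X t - xstar),
        real_inner_self_eq_norm_sq, mul_one, one_mul]
      set P1 := (inner ℝ (f' (X t + b • V t)) (V t) : ℝ) with hP1
      set Q := (inner ℝ (f' (X t + b • V t)) (X t - xstar) : ℝ) with hQ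
      set M := (inner ℝ (X t - xstar) (V t) : ℝ) with hM2
      set G2 := ‖f' (X t + b • V t)‖^2 with hG2
      set W2 := ‖X t - xstar‖^2 with hW2
      set NV := ‖V t‖^2 with hNV
      set Fv := f (X t + b • V t) with hFv2
      set u := t ^ (γ-1) with hu
      have htD' : t - γ*b*3 ≠ 0 := (show (0:ℝ) < t - γ*b*3 by linarith).ne'
      have ht0' : t ≠ 0 := ht0.ne'
      field_simp
      ring
    · -- the inequality
      set b := Real.sqrt s with hb_def
      have hc : 0 < γ * b := mul_pos hγ0 hb
      have ht0 : (0:ℝ) < t := by nlinarith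
      have htD : (0:ℝ) < t - 3*γ*b := by nlinarith
      have eγ : t ^ γ = t ^ (γ-1) * t := by
        rw [← Real.rpow_add_one ht0.ne' (γ-1)]; ring_nf
      have hu2 : (0:ℝ) < (t^(γ-1))^2 := by positivity
      have hFnn : 0 ≤ f (X t + b • V t) - f xstar := sub_nonneg.mpr (hmin _)
      have hG2nn : (0:ℝ) ≤ ‖f' (X t + b • V t)‖^2 := sq_nonneg _
      have hWnn : (0:ℝ) ≤ ‖X t - xstar‖^2 := sq_nonneg _
      have hcvx : f (X t + b • V t) - f xstar
          ≤ b * ⟪f' (X t + b • V t), V t⟫ + ⟪f' (X t + b • V t), X t - xstar⟫ := by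
        have h := grad_convex_ineq hconv (hgrad (X t + b • V t)) xstar
        have h2 : ⟪f' (X t + b • V t), xstar - (X t + b • V t)⟫
            = -(b * ⟪f' (X t + b • V t), V t⟫ + ⟪f' (X t + b • V t), X t - xstar⟫) := by
          rw [show xstar - (X t + b • V t) = -((X t - xstar) + b • V t) by abel]
          rw [inner_neg_right, inner_add_right, real_inner_smul_right]
          ring
        rw [h2] at h
        linarith
      have hdiv1 : (((2*γ-1)*((t-2*γ*b)*(t+3*γ*b/2)) + t*(2*t-γ*b/2))*(t-3*γ*b)
            - t*((t-2*γ*b)*(t+3*γ*b/2))) / (t-3*γ*b)^2 ≤ 2*γ*(t+3*γ*b/2) := by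
        rw [div_le_iff₀ (by positivity)]
        nlinarith [poly1 hγ0 hγ1 hb ht]
      have hdiv2 : t*(t-γ*b) ≤ (t-2*γ*b)*(t+3*γ*b/2)^2/(t-3*γ*b) := by
        rw [le_div_iff₀ htD]
        nlinarith [poly2 hγ0 hγ1 hb ht]
      have hMcnn : (0:ℝ) ≤ 2*γ*(t^(γ-1))^2*(t+3*γ*b/2) := by
        have : (0:ℝ) ≤ t+3*γ*b/2 := by nlinarith
        positivity
      have e1 : (t^(γ-1))^2 * ((((2*γ-1)*((t-2*γ*b)*(t+3*γ*b/2)) + t*(2*t-γ*b/2))*(t-3*γ*b)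
            - t*((t-2*γ*b)*(t+3*γ*b/2))) / (t-3*γ*b)^2) * (f (X t + b • V t) - f xstar)
          ≤ (t^(γ-1))^2 * (2*γ*(t+3*γ*b/2)) * (f (X t + b • V t) - f xstar) :=
        mul_le_mul_of_nonneg_right (mul_le_mul_of_nonneg_left hdiv1 hu2.le) hFnn
      have e2 : -(2*γ*(t^(γ-1))^2*(t+3*γ*b/2) *
            (b * ⟪f' (X t + b • V t), V t⟫ + ⟪f' (X t + b • V t), X t - xstar⟫))
          ≤ -(2*γ*(t^(γ-1))^2*(t+3*γ*b/2) * (f (X t + b • V t) - f xstar)) :=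
        neg_le_neg (mul_le_mul_of_nonneg_left hcvx hMcnn)
      have e3 : -(b*(t^(γ-1))^2*((t-2*γ*b)*(t+3*γ*b/2)^2/(t-3*γ*b)) * ‖f' (X t + b • V t)‖^2)
          ≤ -(b*(t^(γ-1))^2*(t*(t-γ*b)) * ‖f' (X t + b • V t)‖^2) := by
        apply neg_le_neg
        apply mul_le_mul_of_nonneg_right _ hG2nn
        apply mul_le_mul_of_nonneg_left hdiv2 (by positivity)
      have e4 : 2*γ*((γ-1)*(γ+1))*(t^(γ-1))^2/t * ‖X t - xstar‖^2 ≤ 0 := by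
        apply mul_nonpos_of_nonpos_of_nonneg _ hWnn
        apply div_nonpos_of_nonpos_of_nonneg _ ht0.le
        nlinarith [mul_nonneg (mul_nonneg hγ0.le hu2.le)
          (show (0:ℝ) ≤ (1-γ)*(γ+1) by nlinarith)]
      rw [eγ]
      nlinarith [e1, e2, e3, e4]
  refine ⟨fun t ht => key t ht, ?_⟩
  apply antitoneOn_of_deriv_nonpos (convex_Ici _)
  · intro x hx
    exact ((key x hx).choose_spec.1).continuousAt.continuousWithinAt
  · intro x hx
    rw [interior_Ici] at hx
    exact ((key x hx.le).choose_spec.1).differentiableAt.differentiableWithinAt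
  · intro x hx
    rw [interior_Ici] at hx
    have hx' : 12 * γ * Real.sqrt s + 1 < x := hx
    obtain ⟨E', hE, hle⟩ := key x hx'.le
    rw [hE.deriv]
    refine le_trans hle ?_
    have hx0 : (0:ℝ) < x := by nlinarith [mul_pos hγ0 hb]
    have h1 : (0:ℝ) < x ^ γ := Real.rpow_pos_of_pos hx0 γ
    have h2 : (0:ℝ) < x ^ (γ-1) := Real.rpow_pos_of_pos hx0 _
    have e : x ^ γ = x ^ (γ-1) * x := by
      rw [← Real.rpow_add_one hx0.ne' (γ-1)]; ring_nf
    have h3 : 0 ≤ x ^ γ - γ * Real.sqrt s * x ^ (γ-1) := by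
      rw [e]; nlinarith [mul_pos h2 (show (0:ℝ) < x - γ*Real.sqrt s by nlinarith [mul_pos hγ0 hb])]
    have h4 : 0 ≤ Real.sqrt s * (x ^ γ * (x ^ γ - γ * Real.sqrt s * x ^ (γ-1))) *
        ‖f' (X x + Real.sqrt s • V x)‖ ^ 2 :=
      mul_nonneg (mul_nonneg hb.le (mul_nonneg h1.le h3)) (sq_nonneg _)
    linarith
end

section
/- For every step size s with 0 < s ≤ 1/L, along the iterates of critical NAG the Lyapunov function E(k) = f(y_{k−1}) − f(x⋆) + (1/2)‖v_k‖², where v_k = (x_k − x_{k−1})/√s, satisfies E(k+1) − E(k) ≤ − (s/2) ‖∇f(y_{k−1})‖² for all k ≥ 1. -/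
open Set Filter Topology
open RealInnerProductSpace

variable {E : Type*} [NormedAddCommGroup E] [InnerProductSpace ℝ E] [CompleteSpace E]

lemma aux_line (f : E → ℝ) (f' : E → E) (hgrad : ∀ z, HasGradientAt f (f' z) z)
    (a b : E) (t : ℝ) :
    HasDerivAt (fun t : ℝ => f (a + t • (b - a))) ⟪f' (a + t • (b - a)), b - a⟫ t := by
  have h1 : HasDerivAt (fun t : ℝ => a + t • (b - a)) (b - a) t := by
    simpa using ((hasDerivAt_id t).smul_const (b - a)).const_add a
  have h2 := (hasGradientAt_iff_hasFDerivAt.mp (hgrad (a + t • (b - a)))).comp_hasDerivAt t h1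
  exact h2

lemma aux_convex_lb (f : E → ℝ) (f' : E → E) (hconv : ConvexOn ℝ Set.univ f)
    (hgrad : ∀ z, HasGradientAt f (f' z) z) (a b : E) :
    f a + ⟪f' a, b - a⟫ ≤ f b := by
  have hder : HasDerivAt (fun t : ℝ => f (a + t • (b - a))) ⟪f' a, b - a⟫ 0 := by
    simpa using aux_line f f' hgrad a b 0
  have htend : Tendsto (slope (fun t : ℝ => f (a + t • (b - a))) 0) (𝓝[>] 0)
      (𝓝 ⟪f' a, b - a⟫) :=
    (hasDerivAt_iff_tendsto_slope.mp hder).mono_left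
      (nhdsWithin_mono 0 (fun t ht => ne_of_gt ht))
  have hle : ⟪f' a, b - a⟫ ≤ f b - f a := by
    refine le_of_tendsto htend ?_
    filter_upwards [Ioc_mem_nhdsGT_of_mem (by constructor <;> norm_num : (0:ℝ) ∈ Ico 0 1)]
      with t ht
    have h1 : f (a + t • (b - a)) ≤ (1 - t) * f a + t * f b := by
      have := hconv.2 (mem_univ a) (mem_univ b) (by linarith [ht.2] : (0:ℝ) ≤ 1 - t)
        (le_of_lt ht.1) (by ring)
      simpa [show (1 - t) • a + t • b = a + t • (b - a) by module] using this
    rw [slope_def_field]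
    simp only [zero_smul, add_zero, sub_zero]
    rw [div_le_iff₀ ht.1]
    have h2 : (1 - t) * f a + t * f b - f a = t * (f b - f a) := by ring
    linarith
  linarith

lemma aux_descent (L : ℝ) (f : E → ℝ) (f' : E → E)
    (hgrad : ∀ z, HasGradientAt f (f' z) z)
    (hlip : ∀ z w, ‖f' z - f' w‖ ≤ L * ‖z - w‖) (a b : E) :
    f b ≤ f a + ⟪f' a, b - a⟫ + L / 2 * ‖b - a‖ ^ 2 := by
  set φ : ℝ → ℝ := fun t =>
    f (a + t • (b - a)) - t * ⟪f' a, b - a⟫ - L / 2 * t ^ 2 * ‖b - a‖ ^ 2 with hφdef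
  have hφ : ∀ t : ℝ, HasDerivAt φ
      (⟪f' (a + t • (b - a)), b - a⟫ - ⟪f' a, b - a⟫ - L * t * ‖b - a‖ ^ 2) t := by
    intro t
    have h1 := aux_line f f' hgrad a b t
    have h2 : HasDerivAt (fun t : ℝ => t * ⟪f' a, b - a⟫) ⟪f' a, b - a⟫ t := by
      simpa using (hasDerivAt_id t).mul_const ⟪f' a, b - a⟫
    have h3 : HasDerivAt (fun t : ℝ => L / 2 * t ^ 2 * ‖b - a‖ ^ 2)
        (L * t * ‖b - a‖ ^ 2) t := by
      have := ((hasDerivAt_pow 2 t).const_mul (L / 2)).mul_const (‖b - a‖ ^ 2)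
      exact this.congr_deriv (by ring_nf)
    exact (h1.sub h2).sub h3
  have hanti : AntitoneOn φ (Icc 0 1) := by
    apply antitoneOn_of_deriv_nonpos (convex_Icc (0:ℝ) 1)
    · exact fun t _ => (hφ t).continuousAt.continuousWithinAt
    · exact fun t _ => (hφ t).differentiableAt.differentiableWithinAt
    · intro t ht
      rw [interior_Icc] at ht
      rw [(hφ t).deriv]
      have hk : ⟪f' (a + t • (b - a)) - f' a, b - a⟫ ≤ L * t * ‖b - a‖ ^ 2 := by
        calc ⟪f' (a + t • (b - a)) - f' a, b - a⟫
            ≤ ‖f' (a + t • (b - a)) - f' a‖ * ‖b - a‖ := real_inner_le_norm _ _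
          _ ≤ (L * ‖(a + t • (b - a)) - a‖) * ‖b - a‖ :=
              mul_le_mul_of_nonneg_right (hlip _ _) (norm_nonneg _)
          _ = L * t * ‖b - a‖ ^ 2 := by
              rw [add_sub_cancel_left, norm_smul, Real.norm_eq_abs, abs_of_pos ht.1]
              ring
      rw [inner_sub_left] at hk
      linarith
  have h01 := hanti (left_mem_Icc.mpr zero_le_one) (right_mem_Icc.mpr zero_le_one) zero_le_one
  simp only [hφdef, zero_smul, add_zero, one_smul, zero_pow, one_pow, zero_mul, mul_zero,
    sub_zero, one_mul, add_sub_cancel] at h01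
  linarith

lemma aux_coco (L : ℝ) (hL : 0 < L) (f : E → ℝ) (f' : E → E)
    (hconv : ConvexOn ℝ Set.univ f)
    (hgrad : ∀ z, HasGradientAt f (f' z) z)
    (hlip : ∀ z w, ‖f' z - f' w‖ ≤ L * ‖z - w‖) (a b : E) :
    f a + ⟪f' a, b - a⟫ + 1 / (2 * L) * ‖f' b - f' a‖ ^ 2 ≤ f b := by
  set u := f' b - f' a with hu
  set c := b - (1 / L) • u with hc
  have h1 := aux_convex_lb f f' hconv hgrad a c
  have h2 := aux_descent L f f' hgrad hlip b c
  have e1 : c - b = -((1 / L) • u) := by rw [hc]; module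
  have e2 : c - a = (b - a) - (1 / L) • u := by rw [hc]; module
  rw [e1] at h2
  rw [e2] at h1
  rw [inner_neg_right, real_inner_smul_right] at h2
  rw [inner_sub_right, real_inner_smul_right] at h1
  have e3 : ‖-((1 / L) • u)‖ ^ 2 = (1 / L) ^ 2 * ‖u‖ ^ 2 := by
    rw [norm_neg, norm_smul, Real.norm_eq_abs, abs_of_pos (by positivity : (0:ℝ) < 1 / L)]
    ring
  rw [e3] at h2
  have e4 : ⟪f' b, u⟫ - ⟪f' a, u⟫ = ‖u‖ ^ 2 := by
    rw [← inner_sub_left, ← hu, real_inner_self_eq_norm_sq]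
  have e5 : L / 2 * ((1 / L) ^ 2 * ‖u‖ ^ 2) = 1 / (2 * L) * ‖u‖ ^ 2 := by
    field_simp
  have e6 : (1 / L) * ‖u‖ ^ 2 - 1 / (2 * L) * ‖u‖ ^ 2 = 1 / (2 * L) * ‖u‖ ^ 2 := by
    field_simp
    ring
  have e7 : 1 / L * ⟪f' b, u⟫ - 1 / L * ⟪f' a, u⟫ = 1 / L * ‖u‖ ^ 2 := by
    rw [← mul_sub, e4]
  linarith [h1, h2, e5, e6, e7]


/-- For every step size s with 0 < s ≤ 1/L, along the iterates of
critical NAG the Lyapunov function E(k) = f(y_{k−1}) − f(x⋆) + (1/2)‖v_k‖²,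
where v_k = (x_k − x_{k−1})/√s, satisfies
E(k+1) − E(k) ≤ − (s/2) ‖∇f(y_{k−1})‖² for all k ≥ 1. -/
theorem critical_NAG_lyapunov_decay
    (s L : ℝ) (hL : 0 < L) (hs : 0 < s) (hsL : s ≤ 1 / L)
    {d : ℕ} (f : EuclideanSpace ℝ (Fin d) → ℝ)
    (f' : EuclideanSpace ℝ (Fin d) → EuclideanSpace ℝ (Fin d))
    (xstar : EuclideanSpace ℝ (Fin d))
    (x y : ℕ → EuclideanSpace ℝ (Fin d))
    (hconv : ConvexOn ℝ Set.univ f)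
    (hgrad : ∀ z, HasGradientAt f (f' z) z)
    (hlip : ∀ z w, ‖f' z - f' w‖ ≤ L * ‖z - w‖)
    (hmin : ∀ z, f xstar ≤ f z)
    (hy0 : y 0 = x 0)
    (hx : ∀ k : ℕ, 1 ≤ k → x k = y (k - 1) - s • f' (y (k - 1)))
    (hy : ∀ k : ℕ, 1 ≤ k → y k = (2 : ℝ) • x k - x (k - 1)) :
    ∀ k : ℕ, 1 ≤ k →
      (f (y k) - f xstar + (1 / 2) * ‖(Real.sqrt s)⁻¹ • (x (k + 1) - x k)‖ ^ 2) -
          (f (y (k - 1)) - f xstar +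
            (1 / 2) * ‖(Real.sqrt s)⁻¹ • (x k - x (k - 1))‖ ^ 2) ≤
        -(s / 2) * ‖f' (y (k - 1))‖ ^ 2 := by
  intro k hk
  have hk1 : x k = y (k - 1) - s • f' (y (k - 1)) := hx k hk
  have hyk : y k = (2 : ℝ) • x k - x (k - 1) := hy k hk
  have hx1 : x (k + 1) = y k - s • f' (y k) := by
    have := hx (k + 1) (by omega)
    simpa using this
  have hB : x (k + 1) - x k = (x k - x (k - 1)) - s • f' (y k) := by
    rw [hx1, hyk]; module
  have hA : y (k - 1) - y k = s • f' (y (k - 1)) - (x k - x (k - 1)) := by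
    rw [hyk, hk1]; module
  have h1 := aux_coco L hL f f' hconv hgrad hlip (y k) (y (k - 1))
  rw [hA, inner_sub_right, real_inner_smul_right] at h1
  have hexp : ‖f' (y (k - 1)) - f' (y k)‖ ^ 2
      = ‖f' (y (k - 1))‖ ^ 2 - 2 * ⟪f' (y k), f' (y (k - 1))⟫ + ‖f' (y k)‖ ^ 2 := by
    rw [norm_sub_sq_real, real_inner_comm]
  have hsq : ∀ v : EuclideanSpace ℝ (Fin d),
      ‖(Real.sqrt s)⁻¹ • v‖ ^ 2 = s⁻¹ * ‖v‖ ^ 2 := by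
    intro v
    rw [norm_smul, Real.norm_eq_abs, abs_of_nonneg (inv_nonneg.mpr (Real.sqrt_nonneg s)),
      mul_pow, inv_pow, Real.sq_sqrt hs.le]
  have hns : ‖(x k - x (k - 1)) - s • f' (y k)‖ ^ 2
      = ‖x k - x (k - 1)‖ ^ 2 - 2 * (s * ⟪f' (y k), x k - x (k - 1)⟫)
        + s ^ 2 * ‖f' (y k)‖ ^ 2 := by
    rw [norm_sub_sq_real, real_inner_smul_right, norm_smul, Real.norm_eq_abs, abs_of_pos hs,
      real_inner_comm]
    ring
  have hE : (1 / 2 : ℝ) * ‖(Real.sqrt s)⁻¹ • (x (k + 1) - x k)‖ ^ 2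
      - (1 / 2) * ‖(Real.sqrt s)⁻¹ • (x k - x (k - 1))‖ ^ 2
      = -⟪f' (y k), x k - x (k - 1)⟫ + s / 2 * ‖f' (y k)‖ ^ 2 := by
    rw [hB, hsq, hsq, hns]
    field_simp
    ring
  have hsl : s * L ≤ 1 := (le_div_iff₀ hL).mp hsL
  have key : s / 2 * ‖f' (y (k - 1)) - f' (y k)‖ ^ 2
      ≤ 1 / (2 * L) * ‖f' (y (k - 1)) - f' (y k)‖ ^ 2 := by
    apply mul_le_mul_of_nonneg_right _ (sq_nonneg _)
    rw [div_le_div_iff₀ two_pos (by positivity)]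
    nlinarith
  have hD : s / 2 * ‖f' (y (k - 1)) - f' (y k)‖ ^ 2
      = s / 2 * ‖f' (y (k - 1))‖ ^ 2 - s * ⟪f' (y k), f' (y (k - 1))⟫
        + s / 2 * ‖f' (y k)‖ ^ 2 := by
    rw [hexp]; ring
  linarith [h1, key, hE, hD]
end
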